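/- Let q_1, ..., q_m ∈ ℝ^k, let P be their convex hull, and let ξ ∈ P. Then there exists a partition of {1,...,m} into sets J₀ and J₁ with J₁ nonempty, an N₀ ∈ ℕ, and for each n a convex combination ξ_n = Σ_j ν_{j,n} q_j with ν_{j,n} ∈ (1/n)·ℕ₀, such that ν_{j,n} = 0 for all j ∈ J₀ and n ≥ N₀, ν_{j,n} > 0 for all j ∈ J₁ and n ≥ N₀, each sequence (ν_{j,n})_n converges, the limits are strictly positive for j ∈ J₁, and ξ_n → ξ. -/

import Mathlib

open Filter Topology

theorem weights_of_mem_hull (k m : ℕ) (q : Fin m → EuclideanSpace ℝ (Fin k))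
    (ξ : EuclideanSpace ℝ (Fin k)) (hξ : ξ ∈ convexHull ℝ (Set.range q)) :
    ∃ μ : Fin m → ℝ, (∀ i, 0 ≤ μ i) ∧ ∑ i, μ i = 1 ∧ ξ = ∑ i, μ i • q i := by
  rw [convexHull_range_eq_exists_affineCombination] at hξ
  obtain ⟨s, w, hw0, hw1, hξ⟩ := hξ
  refine ⟨fun i => if i ∈ s then w i else 0, fun i => ?_, ?_, ?_⟩
  · by_cases h : i ∈ s <;> simp [h, hw0 i]
  · rw [Finset.sum_ite_mem, Finset.univ_inter, hw1]
  · rw [← hξ, Finset.affineCombination_eq_linear_combination s q w hw1]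
    simp only [ite_smul, zero_smul]
    rw [Finset.sum_ite_mem, Finset.univ_inter]

theorem stmt1 (k m : ℕ) (q : Fin m → EuclideanSpace ℝ (Fin k))
    (ξ : EuclideanSpace ℝ (Fin k)) (hξ : ξ ∈ convexHull ℝ (Set.range q)) :
    ∃ (J₀ J₁ : Finset (Fin m)) (N₀ : ℕ) (ν : ℕ → Fin m → ℝ) (L : Fin m → ℝ),
      Disjoint J₀ J₁ ∧ J₀ ∪ J₁ = Finset.univ ∧ J₁.Nonempty ∧
      (∀ n : ℕ, 1 ≤ n → (∀ j, ∃ a : ℕ, ν n j = (a : ℝ) / n) ∧ ∑ j, ν n j = 1) ∧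
      (∀ j ∈ J₀, ∀ n ≥ N₀, ν n j = 0) ∧
      (∀ j ∈ J₁, ∀ n ≥ N₀, 0 < ν n j) ∧
      (∀ j, Tendsto (fun n => ν n j) atTop (𝓝 (L j))) ∧
      (∀ j ∈ J₁, 0 < L j) ∧
      Tendsto (fun n => ∑ j, ν n j • q j) atTop (𝓝 ξ) := by
  obtain ⟨μ, hμ0, hμ1, hξeq⟩ := weights_of_mem_hull k m q ξ hξ
  have hj₀ : ∃ j₀, 0 < μ j₀ := by
    by_contra h
    push_neg at h
    have : ∑ i, μ i = 0 := Finset.sum_eq_zero fun i _ => le_antisymm (h i) (hμ0 i)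
    rw [this] at hμ1; norm_num at hμ1
  obtain ⟨j₀, hj₀⟩ := hj₀
  set s : Finset (Fin m) := Finset.univ.erase j₀ with hs
  have herase : ∑ i ∈ s, μ i = 1 - μ j₀ := by
    have := Finset.add_sum_erase Finset.univ μ (Finset.mem_univ j₀)
    rw [hμ1] at this; linarith [this]
  set S : ℕ → ℕ := fun n => ∑ i ∈ s, ⌊(n : ℝ) * μ i⌋₊ with hSdef
  have hScast : ∀ n : ℕ, (S n : ℝ) ≤ n * (1 - μ j₀) := by
    intro n
    simp only [hSdef]
    push_cast
    calc ∑ i ∈ s, (⌊(n:ℝ) * μ i⌋₊ : ℝ) ≤ ∑ i ∈ s, (n:ℝ) * μ i :=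
          Finset.sum_le_sum fun i _ => Nat.floor_le (mul_nonneg (Nat.cast_nonneg n) (hμ0 i))
      _ = n * (1 - μ j₀) := by rw [← Finset.mul_sum, herase]
  have hSle : ∀ n : ℕ, S n ≤ n := by
    intro n
    have h1 : (S n : ℝ) ≤ n := by
      refine (hScast n).trans ?_
      nlinarith [hμ0 j₀, Nat.cast_nonneg (α := ℝ) n]
    exact_mod_cast h1
  set ν : ℕ → Fin m → ℝ := fun n j =>
    if j = j₀ then ((n - S n : ℕ) : ℝ) / n else (⌊(n : ℝ) * μ j⌋₊ : ℝ) / n with hν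
  have hsub : ∀ n : ℕ, ((n - S n : ℕ) : ℝ) = (n : ℝ) - S n := fun n =>
    Nat.cast_sub (hSle n)
  have hνj₀ : ∀ n : ℕ, 1 ≤ n → μ j₀ ≤ ν n j₀ := by
    intro n hn
    have hn' : (0:ℝ) < n := by exact_mod_cast hn
    simp only [hν, if_pos rfl]
    rw [hsub n, le_div_iff₀ hn']
    nlinarith [hScast n]
  -- sum of ν over s
  have hsums : ∀ n : ℕ, ∑ i ∈ s, ν n i = (S n : ℝ) / n := by
    intro n
    simp only [hSdef]
    push_cast
    rw [Finset.sum_div]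
    exact Finset.sum_congr rfl fun i hi => by
      simp [hν, Finset.ne_of_mem_erase hi]
  have hsplit : ∀ n : ℕ, ∑ j, ν n j = ν n j₀ + ∑ i ∈ s, ν n i := fun n =>
    (Finset.add_sum_erase Finset.univ (ν n) (Finset.mem_univ j₀)).symm
  have hsum1 : ∀ n : ℕ, 1 ≤ n → ∑ j, ν n j = 1 := by
    intro n hn
    have hn0 : (n:ℝ) ≠ 0 := Nat.cast_ne_zero.mpr (by omega)
    rw [hsplit n, hsums n]
    simp only [hν, if_pos rfl]
    rw [hsub n, ← add_div]
    field_simp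
    ring
  -- convergence for j ≠ j₀
  have hconv : ∀ j, j ≠ j₀ → Tendsto (fun n => ν n j) atTop (𝓝 (μ j)) := by
    intro j h
    have h2 := (tendsto_nat_floor_mul_div_atTop (hμ0 j)).comp
      (tendsto_natCast_atTop_atTop (R := ℝ))
    simp only [hν, if_neg h]
    convert h2 using 2 with n
    simp [Function.comp, mul_comm]
  have hconvj₀ : Tendsto (fun n => ν n j₀) atTop (𝓝 (μ j₀)) := by
    have h1 : Tendsto (fun n => 1 - ∑ i ∈ s, ν n i) atTop (𝓝 (1 - ∑ i ∈ s, μ i)) := by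
      exact tendsto_const_nhds.sub <| tendsto_finset_sum _ fun i hi =>
        hconv i (Finset.ne_of_mem_erase hi)
    rw [herase] at h1
    have h2 : (1 - (1 - μ j₀)) = μ j₀ := by ring
    rw [h2] at h1
    refine h1.congr' ?_
    filter_upwards [eventually_ge_atTop 1] with n hn
    have := hsum1 n hn
    rw [hsplit n] at this
    linarith
  have hconvall : ∀ j, Tendsto (fun n => ν n j) atTop (𝓝 (μ j)) := by
    intro j
    by_cases h : j = j₀
    · rw [h]; exact hconvj₀
    · exact hconv j h
  refine ⟨Finset.univ.filter (fun j => ¬ 0 < μ j), Finset.univ.filter (fun j => 0 < μ j),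
    max 1 (Finset.univ.sup fun j => ⌈(μ j)⁻¹⌉₊ + 1), ν, μ, ?_, ?_, ?_, ?_, ?_, ?_,
    hconvall, ?_, ?_⟩
  · exact (Finset.disjoint_filter_filter_not _ _ _).symm
  · rw [Finset.union_comm]; exact Finset.filter_union_filter_not_eq _ _
  · exact ⟨j₀, by simp [hj₀]⟩
  · intro n hn
    refine ⟨fun j => ?_, hsum1 n hn⟩
    by_cases h : j = j₀
    · exact ⟨n - S n, by simp [hν, h]⟩
    · exact ⟨⌊(n : ℝ) * μ j⌋₊, by simp [hν, h]⟩
  · intro j hj n _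
    simp only [Finset.mem_filter] at hj
    have hμj : μ j = 0 := le_antisymm (not_lt.mp hj.2) (hμ0 j)
    have hne : j ≠ j₀ := by rintro rfl; exact hj.2 hj₀
    simp [hν, hne, hμj]
  · intro j hj n hn
    simp only [Finset.mem_filter] at hj
    have hn1 : 1 ≤ n := le_trans (le_max_left _ _) hn
    have hn' : (0:ℝ) < n := by exact_mod_cast hn1
    by_cases h : j = j₀
    · rw [h]; exact lt_of_lt_of_le (h ▸ hj.2) (hνj₀ n hn1)
    · have hsup : ⌈(μ j)⁻¹⌉₊ + 1 ≤ n :=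
        le_trans (le_trans (Finset.le_sup (f := fun j => ⌈(μ j)⁻¹⌉₊ + 1)
          (Finset.mem_univ j)) (le_max_right 1 _)) hn
      have h2 : ((μ j)⁻¹ : ℝ) ≤ ⌈(μ j)⁻¹⌉₊ := Nat.le_ceil _
      have h3 : (⌈(μ j)⁻¹⌉₊ + 1 : ℝ) ≤ n := by exact_mod_cast hsup
      have h1 : (1:ℝ) ≤ (n:ℝ) * μ j := by
        have h4 : (μ j)⁻¹ ≤ (n:ℝ) := by linarith
        rw [inv_le_iff_one_le_mul₀ hj.2] at h4
        linarith [h4]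
      have h5 : 1 ≤ ⌊(n : ℝ) * μ j⌋₊ := Nat.le_floor (by exact_mod_cast h1)
      have h6 : (0:ℝ) < ⌊(n : ℝ) * μ j⌋₊ := by exact_mod_cast h5
      simp only [hν, if_neg h]
      positivity
  · intro j hj
    simp only [Finset.mem_filter] at hj
    exact hj.2
  · rw [hξeq]
    exact tendsto_finset_sum _ fun j _ => (hconvall j).smul_const (q j)
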